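/- arXiv:1707.01600 — 4 statements merged into one kernel-verified Lean document; each statement's English description precedes it below -/
import Mathlib

section
/- Let u > e^r > d > 0 and H ≥ 0. With p_u := (u^H e^r - d^{H+1})/(u^{H+1} - d^{H+1}), p_d := (e^r d^H - d^{H+1})/(u^{H+1} - d^{H+1}), q_u := 1 - p_u, q_d := 1 - p_d, one has q_d > q_u and p_u > p_d whenever H ≥ 1; equivalently, the Markov chain with transition matrix rows (q_d, p_d) and (q_u, p_u) has positive one-step autocorrelation: a down move is more likely after a down move than after an up move. -/
theorem stmt8 (u d r : ℝ) (H : ℕ)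
    (hu : u > Real.exp r) (hd : Real.exp r > d) (hd0 : d > 0) (hH : 1 ≤ H)
    (pu pd qu qd : ℝ)
    (hpu : pu = (u ^ H * Real.exp r - d ^ (H + 1)) / (u ^ (H + 1) - d ^ (H + 1)))
    (hpd : pd = (Real.exp r * d ^ H - d ^ (H + 1)) / (u ^ (H + 1) - d ^ (H + 1)))
    (hqu : qu = 1 - pu) (hqd : qd = 1 - pd) :
    qd > qu ∧ pu > pd := by
  have hdu : d < u := lt_trans hd hu
  have hpow : d ^ H < u ^ H :=
    pow_lt_pow_left₀ hdu hd0.le (by omega)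
  have hpow1 : d ^ (H + 1) < u ^ (H + 1) :=
    pow_lt_pow_left₀ hdu hd0.le (by omega)
  have hden : 0 < u ^ (H + 1) - d ^ (H + 1) := sub_pos.mpr hpow1
  have hexp : 0 < Real.exp r := Real.exp_pos r
  have hnum : Real.exp r * d ^ H - d ^ (H + 1) < u ^ H * Real.exp r - d ^ (H + 1) := by
    have : Real.exp r * d ^ H < u ^ H * Real.exp r := by
      rw [mul_comm]; exact mul_lt_mul_of_pos_right hpow hexp
    linarith
  have hppd : pd < pu := by
    rw [hpu, hpd]
    exact div_lt_div_of_pos_right hnum hden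
  exact ⟨by rw [hqu, hqd]; linarith, hppd⟩
end

section
/- Fix μ, σ > 0, r ≥ 0, T > 0, integer H ≥ 0, and set δ_n = 1/√n, u_n = exp(μTδ_n² + σ√T δ_n), d_n = exp(μTδ_n² − σ√T δ_n), r_n = rTδ_n². Define p_{n,u} := (u_n^H e^{r_n} − d_n^{H+1})/(u_n^{H+1} − d_n^{H+1}). Then p_{n,u} = (2H+1)/(2(H+1)) − [ (μ−r)/(2(H+1)σ) + (2H+1)σ/(4(H+1)) ]√T δ_n + O(δ_n²) as n → ∞. -/
open Filter Asymptotics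

private lemma expBound3 {t : ℝ} (ht : |t| ≤ 1) :
    |Real.exp t - (1 + t + t ^ 2 / 2)| ≤ |t| ^ 3 := by
  have h := Real.exp_bound ht (n := 3) (by norm_num)
  have hsum : (∑ m ∈ Finset.range 3, t ^ m / (m.factorial : ℝ)) = 1 + t + t ^ 2 / 2 := by
    norm_num [Finset.sum_range_succ, Nat.factorial]
  rw [hsum] at h
  have h2 : |t| ^ 3 * (((3:ℕ).succ : ℝ) / (((3:ℕ).factorial : ℝ) * 3)) ≤ |t| ^ 3 := by
    have h3 : (((3:ℕ).succ : ℝ) / (((3:ℕ).factorial : ℝ) * 3)) = 2 / 9 := by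
      norm_num [Nat.factorial]
    rw [h3]
    nlinarith [pow_nonneg (abs_nonneg t) 3]
  exact h.trans h2

private lemma exp_taylor2 (x : ℕ → ℝ) (hx : Filter.Tendsto x Filter.atTop (nhds 0)) (a b : ℝ) :
    (fun n => Real.exp (a * x n ^ 2 + b * x n) - (1 + b * x n + (a + b ^ 2 / 2) * x n ^ 2))
      =O[Filter.atTop] fun n => x n ^ 3 := by
  set M := |a| + |b| + 1 with hM
  have hM1 : (1:ℝ) ≤ M := by
    have := abs_nonneg a; have := abs_nonneg b; simp [hM]; linarith
  have hMpos : (0:ℝ) < M := lt_of_lt_of_le one_pos hM1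
  have hsm : ∀ᶠ n in atTop, |x n| ≤ 1 / M := by
    have h := Metric.tendsto_nhds.mp hx (1 / M) (by positivity)
    filter_upwards [h] with n hn
    rw [Real.dist_eq, sub_zero] at hn
    exact hn.le
  have hE1 : (fun n => Real.exp (a * x n ^ 2 + b * x n)
      - (1 + (a * x n ^ 2 + b * x n) + (a * x n ^ 2 + b * x n) ^ 2 / 2))
      =O[Filter.atTop] fun n => x n ^ 3 := by
    apply IsBigO.of_bound (M ^ 3)
    filter_upwards [hsm] with n hn
    have hx1 : |x n| ≤ 1 := hn.trans ((div_le_one hMpos).mpr hM1)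
    have ht : |a * x n ^ 2 + b * x n| ≤ M * |x n| := by
      calc |a * x n ^ 2 + b * x n| ≤ |a * x n ^ 2| + |b * x n| := abs_add_le _ _
        _ = |a| * |x n| ^ 2 + |b| * |x n| := by rw [abs_mul, abs_mul, abs_pow]
        _ ≤ M * |x n| := by
            have k1 := mul_le_mul_of_nonneg_left hx1
              (mul_nonneg (abs_nonneg a) (abs_nonneg (x n)))
            nlinarith [abs_nonneg a, abs_nonneg b, abs_nonneg (x n)]
    have ht1 : |a * x n ^ 2 + b * x n| ≤ 1 := by
      refine ht.trans ?_
      calc M * |x n| ≤ M * (1 / M) := mul_le_mul_of_nonneg_left hn hMpos.le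
        _ = 1 := by field_simp
    rw [Real.norm_eq_abs, Real.norm_eq_abs, abs_pow]
    calc |Real.exp (a * x n ^ 2 + b * x n)
        - (1 + (a * x n ^ 2 + b * x n) + (a * x n ^ 2 + b * x n) ^ 2 / 2)|
        ≤ |a * x n ^ 2 + b * x n| ^ 3 := expBound3 ht1
      _ ≤ (M * |x n|) ^ 3 := pow_le_pow_left₀ (abs_nonneg _) ht 3
      _ = M ^ 3 * |x n| ^ 3 := by ring
  have h3 : (fun n => a * b * x n ^ 3) =O[Filter.atTop] fun n => x n ^ 3 :=
    (isBigO_refl (fun n => x n ^ 3) atTop).const_mul_left (a * b)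
  have h4 : (fun n => a ^ 2 / 2 * x n ^ 4) =O[Filter.atTop] fun n => x n ^ 3 := by
    apply IsBigO.of_bound (a ^ 2 / 2)
    filter_upwards [hsm] with n hn
    have hx1 : |x n| ≤ 1 := hn.trans ((div_le_one hMpos).mpr hM1)
    rw [Real.norm_eq_abs, Real.norm_eq_abs, abs_mul, abs_pow, abs_pow]
    have h5 : |x n| ^ 4 ≤ |x n| ^ 3 := pow_le_pow_of_le_one (abs_nonneg _) hx1 (by norm_num)
    have h6 : |a ^ 2 / 2| = a ^ 2 / 2 := abs_of_nonneg (by positivity)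
    rw [h6]
    exact mul_le_mul_of_nonneg_left h5 (by positivity)
  have heq : (fun n => Real.exp (a * x n ^ 2 + b * x n)
      - (1 + b * x n + (a + b ^ 2 / 2) * x n ^ 2))
      = fun n => (Real.exp (a * x n ^ 2 + b * x n)
        - (1 + (a * x n ^ 2 + b * x n) + (a * x n ^ 2 + b * x n) ^ 2 / 2))
        + (a * b * x n ^ 3 + a ^ 2 / 2 * x n ^ 4) := by
    funext n; ring
  rw [heq]
  exact hE1.add (h3.add h4)

private lemma polyzero {A B C D L c y : ℝ} (h1 : B + D - 2 * L * D = 0)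
    (h2 : A + B ^ 2 / 2 - C - D ^ 2 / 2 - 2 * c * D = 0) :
    (1 + B * y + (A + B ^ 2 / 2) * y ^ 2)
      - (1 + (-D) * y + (C + (-D) ^ 2 / 2) * y ^ 2)
      - (L + c * y) * ((1 + D * y + (C + D ^ 2 / 2) * y ^ 2)
        - (1 + (-D) * y + (C + (-D) ^ 2 / 2) * y ^ 2)) = 0 := by
  linear_combination y * h1 + y ^ 2 * h2

set_option maxHeartbeats 1000000 in
theorem stmt10 (μ σ r T : ℝ) (hμ : μ > 0) (hσ : σ > 0) (hr : r ≥ 0) (hT : T > 0) (H : ℕ)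
    (δ un dn rn pnu : ℕ → ℝ)
    (hδ : ∀ n : ℕ, δ n = 1 / Real.sqrt n)
    (hu : ∀ n, un n = Real.exp (μ * T * δ n ^ 2 + σ * Real.sqrt T * δ n))
    (hd : ∀ n, dn n = Real.exp (μ * T * δ n ^ 2 - σ * Real.sqrt T * δ n))
    (hr' : ∀ n, rn n = r * T * δ n ^ 2)
    (hp : ∀ n, pnu n = (un n ^ H * Real.exp (rn n) - dn n ^ (H + 1)) /
      (un n ^ (H + 1) - dn n ^ (H + 1))) :
    (fun n : ℕ => pnu n - ((2 * (H : ℝ) + 1) / (2 * ((H : ℝ) + 1))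
        - ((μ - r) / (2 * ((H : ℝ) + 1) * σ) + (2 * (H : ℝ) + 1) * σ / (4 * ((H : ℝ) + 1)))
            * Real.sqrt T * δ n))
      =O[atTop] fun n => δ n ^ 2 := by
  set s := Real.sqrt T with hs
  have hspos : 0 < s := Real.sqrt_pos.mpr hT
  have hs2 : s ^ 2 = T := Real.sq_sqrt hT.le
  have hH1 : ((H:ℝ) + 1) ≠ 0 := by positivity
  set A : ℝ := (H:ℝ) * μ * s ^ 2 + r * s ^ 2 with hA
  set B : ℝ := (H:ℝ) * σ * s with hB
  set C : ℝ := ((H:ℝ) + 1) * μ * s ^ 2 with hC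
  set D : ℝ := ((H:ℝ) + 1) * σ * s with hD
  set L : ℝ := (2 * (H:ℝ) + 1) / (2 * ((H:ℝ) + 1)) with hL
  set c : ℝ := -(((μ - r) / (2 * ((H:ℝ) + 1) * σ)
      + (2 * (H:ℝ) + 1) * σ / (4 * ((H:ℝ) + 1))) * s) with hc
  have hDpos : 0 < D := by rw [hD]; positivity
  have hCnn : 0 ≤ C := by rw [hC]; positivity
  -- tendsto 0
  have hsq : Tendsto (fun n : ℕ => Real.sqrt n) atTop atTop := by
    refine tendsto_atTop_atTop.2 fun b => ⟨⌈b ^ 2⌉₊, fun n hn => ?_⟩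
    rcases le_or_gt b 0 with hb | hb
    · exact hb.trans (Real.sqrt_nonneg _)
    · have h1 : b ^ 2 ≤ (n:ℝ) := (Nat.le_ceil _).trans (by exact_mod_cast hn)
      calc b = Real.sqrt (b ^ 2) := (Real.sqrt_sq hb.le).symm
        _ ≤ Real.sqrt n := Real.sqrt_le_sqrt h1
  have hx0 : Tendsto δ atTop (nhds 0) := by
    have h1 : Tendsto (fun n : ℕ => (Real.sqrt n)⁻¹) atTop (nhds 0) :=
      hsq.inv_tendsto_atTop
    exact h1.congr fun n => by rw [hδ n, one_div]
  -- Taylor expansions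
  have h1 : B + D - 2 * L * D = 0 := by
    rw [hB, hD, hL]; field_simp; ring
  have h2 : A + B ^ 2 / 2 - C - D ^ 2 / 2 - 2 * c * D = 0 := by
    rw [hA, hB, hC, hD, hc]; field_simp; ring
  have he1 := exp_taylor2 δ hx0 A B
  have he2 := exp_taylor2 δ hx0 C (-D)
  have he3 := exp_taylor2 δ hx0 C D
  have hLc : (fun n => L + c * δ n) =O[atTop] (fun _ : ℕ => (1:ℝ)) := by
    exact (tendsto_const_nhds.add (hx0.const_mul c)).isBigO_one (F := ℝ)
  have hmul := hLc.mul (he3.sub he2)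
  simp only [one_mul] at hmul
  have hsum := (he1.sub he2).sub hmul
  have hφ : (fun n => (Real.exp (A * δ n ^ 2 + B * δ n)
        - Real.exp (C * δ n ^ 2 + (-D) * δ n))
      - (L + c * δ n) * (Real.exp (C * δ n ^ 2 + D * δ n)
        - Real.exp (C * δ n ^ 2 + (-D) * δ n)))
      =O[atTop] fun n => δ n ^ 3 := by
    refine hsum.congr (fun n => ?_) fun n => rfl
    linear_combination -polyzero (y := δ n) h1 h2
  obtain ⟨K, hKpos, hKb⟩ := hφ.exists_pos
  have hKbd := hKb.bound
  -- eventual facts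
  have hev1 : ∀ᶠ n in atTop, 0 < δ n := by
    filter_upwards [eventually_ge_atTop 1] with n hn
    have hn' : (0:ℝ) < n := by exact_mod_cast Nat.lt_of_lt_of_le Nat.zero_lt_one hn
    rw [hδ n]
    exact div_pos one_pos (Real.sqrt_pos.mpr hn')
  have hev2 : ∀ᶠ n in atTop, D * δ n ≤ 1 := by
    have h := Metric.tendsto_nhds.mp hx0 (1 / D) (by positivity)
    filter_upwards [h, hev1] with n ha hb
    rw [Real.dist_eq, sub_zero, abs_of_pos hb] at ha
    have h2 := (lt_div_iff₀ hDpos).mp ha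
    nlinarith
  rw [Asymptotics.isBigO_iff]
  refine ⟨K * Real.exp 1 / (2 * D), ?_⟩
  filter_upwards [hKbd, hev1, hev2] with n hb hpos hD1
  set E1 := Real.exp (A * δ n ^ 2 + B * δ n) with hE1
  set E2 := Real.exp (C * δ n ^ 2 + (-D) * δ n) with hE2
  set E3 := Real.exp (C * δ n ^ 2 + D * δ n) with hE3
  -- rewrite pnu
  have hnum : un n ^ H * Real.exp (rn n) = E1 := by
    rw [hu, hr', hE1, ← Real.exp_nat_mul, ← Real.exp_add]
    congr 1
    rw [hA, hB, ← hs2]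
    ring
  have hdn : dn n ^ (H + 1) = E2 := by
    rw [hd, hE2, ← Real.exp_nat_mul]
    congr 1
    rw [hC, hD, ← hs2]
    push_cast
    ring
  have hun : un n ^ (H + 1) = E3 := by
    rw [hu, hE3, ← Real.exp_nat_mul]
    congr 1
    rw [hC, hD, ← hs2]
    push_cast
    ring
  -- lower bound on denominator
  have hden_pos : 0 < E3 - E2 := by
    rw [hE3, hE2, sub_pos]
    apply Real.exp_lt_exp.mpr
    nlinarith
  have hne : E3 - E2 ≠ 0 := ne_of_gt hden_pos
  have hE2low : Real.exp (-1) ≤ E2 := by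
    rw [hE2]
    apply Real.exp_le_exp.mpr
    nlinarith
  have hfac : E3 = E2 * Real.exp (2 * D * δ n) := by
    rw [hE3, hE2, ← Real.exp_add]
    congr 1
    ring
  have hlow : Real.exp (-1) * (2 * D * δ n) ≤ E3 - E2 := by
    have hexp : 2 * D * δ n ≤ Real.exp (2 * D * δ n) - 1 := by
      nlinarith [Real.add_one_le_exp (2 * D * δ n)]
    have h0 : 0 ≤ 2 * D * δ n := by positivity
    calc Real.exp (-1) * (2 * D * δ n) ≤ E2 * (2 * D * δ n) :=
          mul_le_mul_of_nonneg_right hE2low h0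
      _ ≤ E2 * (Real.exp (2 * D * δ n) - 1) :=
          mul_le_mul_of_nonneg_left hexp (Real.exp_pos _).le
      _ = E3 - E2 := by rw [hfac]; ring
  have hlow_pos : 0 < Real.exp (-1) * (2 * D * δ n) := by positivity
  -- putting it together
  have htgt : (2 * (H:ℝ) + 1) / (2 * ((H:ℝ) + 1))
      - ((μ - r) / (2 * ((H:ℝ) + 1) * σ) + (2 * (H:ℝ) + 1) * σ / (4 * ((H:ℝ) + 1)))
        * s * δ n = L + c * δ n := by
    rw [hL, hc]; ring
  have hpn : pnu n - (L + c * δ n) = ((E1 - E2) - (L + c * δ n) * (E3 - E2)) / (E3 - E2) := by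
    rw [hp, hnum, hdn, hun]
    field_simp
  have hbφ : |(E1 - E2) - (L + c * δ n) * (E3 - E2)| ≤ K * δ n ^ 3 := by
    have := hb
    rw [Real.norm_eq_abs, Real.norm_eq_abs, abs_pow, abs_of_pos hpos] at this
    exact this
  rw [htgt, hpn]
  rw [Real.norm_eq_abs, Real.norm_eq_abs, abs_div, abs_of_pos hden_pos, abs_pow,
    abs_of_pos hpos]
  calc |(E1 - E2) - (L + c * δ n) * (E3 - E2)| / (E3 - E2)
      ≤ (K * δ n ^ 3) / (Real.exp (-1) * (2 * D * δ n)) :=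
        div_le_div₀ (by positivity) hbφ hlow_pos hlow
    _ = K * Real.exp 1 / (2 * D) * δ n ^ 2 := by
        rw [Real.exp_neg]
        field_simp
end

section
/- With the same scaling as above, define p_{n,d} := (e^{r_n} d_n^H − d_n^{H+1})/(u_n^{H+1} − d_n^{H+1}). Then p_{n,d} = 1/(2(H+1)) − [ (μ−r)/(2(H+1)σ) + (2H+1)σ/(4(H+1)) ]√T δ_n + O(δ_n²), and consequently λ_n := p_{n,u} − p_{n,d} = H/(H+1) + O(δ_n²). -/
open Filter Asymptotics

private noncomputable def Efn (a b : ℝ) : ℝ → ℝ := fun x => Real.exp (a * x + b * x ^ 2)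
private noncomputable def Pfn (a b : ℝ) : ℝ → ℝ := fun x => 1 + a * x + (b + a ^ 2 / 2) * x ^ 2

private lemma expTaylor2 :
    (fun y : ℝ => Real.exp y - (1 + y + y ^ 2 / 2)) =O[nhds (0 : ℝ)] fun y => y ^ 3 := by
  rw [isBigO_iff]
  refine ⟨1, ?_⟩
  filter_upwards [Metric.closedBall_mem_nhds (0 : ℝ) one_pos] with y hy
  have hy1 : |y| ≤ 1 := by simpa [Real.dist_eq] using hy
  have h2 := Real.exp_bound hy1 (by norm_num : 0 < 3)
  have h3 : (∑ m ∈ Finset.range 3, y ^ m / (Nat.factorial m : ℝ)) = 1 + y + y ^ 2 / 2 := by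
    simp [Finset.sum_range_succ, Nat.factorial]
  rw [h3] at h2
  have h5 : (0:ℝ) ≤ |y| ^ 3 := by positivity
  have h4 : |y| ^ 3 * (((3:ℕ).succ : ℝ) / ((Nat.factorial 3 : ℝ) * 3)) ≤ 1 * ‖y ^ 3‖ := by
    rw [Real.norm_eq_abs, abs_pow, one_mul]
    have hc : (((3:ℕ).succ : ℝ) / ((Nat.factorial 3 : ℝ) * 3)) ≤ 1 := by
      norm_num [Nat.factorial]
    nlinarith
  calc ‖Real.exp y - (1 + y + y ^ 2 / 2)‖
      = |Real.exp y - (1 + y + y ^ 2 / 2)| := rfl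
    _ ≤ |y| ^ 3 * (((3:ℕ).succ : ℝ) / ((Nat.factorial 3 : ℝ) * 3)) := h2
    _ ≤ 1 * ‖y ^ 3‖ := h4

private lemma sq_isBigO_id : (fun x : ℝ => x ^ 2) =O[nhds (0 : ℝ)] fun x => x := by
  rw [isBigO_iff]
  refine ⟨1, ?_⟩
  filter_upwards [Metric.closedBall_mem_nhds (0 : ℝ) one_pos] with x hx
  have hx1 : |x| ≤ 1 := by simpa [Real.dist_eq] using hx
  have h : ‖x ^ 2‖ = |x| * |x| := by rw [Real.norm_eq_abs, abs_pow]; ring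
  rw [h, Real.norm_eq_abs, one_mul]
  nlinarith [abs_nonneg x]

private lemma expPolyTaylor (a b : ℝ) :
    (fun x : ℝ => Efn a b x - Pfn a b x) =O[nhds (0 : ℝ)] fun x => x ^ 3 := by
  have hy : Tendsto (fun x : ℝ => a * x + b * x ^ 2) (nhds 0) (nhds 0) := by
    have hc : Continuous fun x : ℝ => a * x + b * x ^ 2 := by continuity
    have := hc.tendsto 0
    simpa using this
  have h1 := expTaylor2.comp_tendsto hy
  have hyx : (fun x : ℝ => a * x + b * x ^ 2) =O[nhds (0:ℝ)] fun x => x :=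
    ((isBigO_refl (fun x : ℝ => x) (nhds 0)).const_mul_left a).add
      (sq_isBigO_id.const_mul_left b)
  have h2 : (fun x : ℝ => (a * x + b * x ^ 2) ^ 3) =O[nhds (0:ℝ)] fun x => x ^ 3 := hyx.pow 3
  have h3 := h1.trans h2
  have h4 : (fun x : ℝ => (1 + (a * x + b * x ^ 2) + (a * x + b * x ^ 2) ^ 2 / 2) - Pfn a b x)
      =O[nhds (0:ℝ)] fun x => x ^ 3 := by
    have hb : Tendsto (fun x : ℝ => a * b + b ^ 2 * x / 2) (nhds 0) (nhds (a * b)) := by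
      have hc : Continuous fun x : ℝ => a * b + b ^ 2 * x / 2 := by continuity
      have := hc.tendsto 0
      simpa using this
    have h5 := (isBigO_refl (fun x : ℝ => x ^ 3) (nhds (0:ℝ))).mul (hb.isBigO_one (F := ℝ))
    refine h5.congr (fun x => ?_) (fun x => by simp)
    simp only [Pfn]; ring
  have h6 := h3.add h4
  refine h6.congr_left fun x => ?_
  simp only [Efn, Pfn, Function.comp]
  ring

private lemma keyQuot (a1 b1 a2 b2 g bd c0 c1 : ℝ)
    (hZ : ∀ x : ℝ, Pfn a1 b1 x - Pfn a2 b2 x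
      - (c0 + c1 * x) * (Pfn g bd x - Pfn (-g) bd x) = 0)
    (hg : 0 < g) (hbd : 0 ≤ bd) (δ : ℕ → ℝ)
    (hδpos : ∀ᶠ n in atTop, 0 < δ n) (hδ0 : Tendsto δ atTop (nhds 0)) :
    (fun n => (Efn a1 b1 (δ n) - Efn a2 b2 (δ n)) /
        (Efn g bd (δ n) - Efn (-g) bd (δ n)) - (c0 + c1 * δ n))
      =O[atTop] fun n => δ n ^ 2 := by
  have hL : (fun x : ℝ => c0 + c1 * x) =O[nhds (0:ℝ)] (fun _ : ℝ => (1:ℝ)) := by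
    have hc : Continuous fun x : ℝ => c0 + c1 * x := by continuity
    have ht : Tendsto (fun x : ℝ => c0 + c1 * x) (nhds 0) (nhds (c0 + c1 * 0)) := hc.tendsto 0
    exact ht.isBigO_one (F := ℝ)
  have hK : (fun x : ℝ => (Efn a1 b1 x - Efn a2 b2 x)
      - (c0 + c1 * x) * (Efn g bd x - Efn (-g) bd x)) =O[nhds (0:ℝ)] fun x => x ^ 3 := by
    have hA := (expPolyTaylor a1 b1).sub (expPolyTaylor a2 b2)
    have hB := hL.mul ((expPolyTaylor g bd).sub (expPolyTaylor (-g) bd))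
    have hB' : (fun x : ℝ => (c0 + c1 * x) *
        ((Efn g bd x - Pfn g bd x) - (Efn (-g) bd x - Pfn (-g) bd x)))
        =O[nhds (0:ℝ)] fun x => x ^ 3 := by
      simpa using hB
    refine (hA.sub hB').congr_left fun x => ?_
    have hz := hZ x
    simp only [Pfn] at hz ⊢
    simp only [Efn]
    linear_combination -hz
  have hKc := hK.comp_tendsto hδ0
  have hden : ∀ x : ℝ, 0 < x → 2 * g * x ≤ Efn g bd x - Efn (-g) bd x := by
    intro x hx
    have h1 : Efn g bd x - Efn (-g) bd x
        = Real.exp (bd * x ^ 2) * (Real.exp (g * x) - Real.exp (-(g * x))) := by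
      simp only [Efn]
      rw [mul_sub, ← Real.exp_add, ← Real.exp_add]
      ring_nf
    have hgx : 0 < g * x := mul_pos hg hx
    have h2 : 2 * (g * x) ≤ Real.exp (g * x) - Real.exp (-(g * x)) := by
      have hs := Real.self_lt_sinh_iff.mpr hgx
      rw [Real.sinh_eq] at hs
      linarith
    have h3 : (1:ℝ) ≤ Real.exp (bd * x ^ 2) := by
      rw [Real.one_le_exp_iff]
      positivity
    rw [h1]
    calc 2 * g * x = 1 * (2 * (g * x)) := by ring
      _ ≤ Real.exp (bd * x ^ 2) * (Real.exp (g * x) - Real.exp (-(g * x))) :=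
          mul_le_mul h3 h2 (by linarith) (by positivity)
  have step1 : (fun n => (Efn a1 b1 (δ n) - Efn a2 b2 (δ n)) /
      (Efn g bd (δ n) - Efn (-g) bd (δ n)) - (c0 + c1 * δ n))
      =O[atTop] fun n => ((Efn a1 b1 (δ n) - Efn a2 b2 (δ n))
        - (c0 + c1 * δ n) * (Efn g bd (δ n) - Efn (-g) bd (δ n))) * (δ n)⁻¹ := by
    rw [isBigO_iff]
    refine ⟨(2 * g)⁻¹, ?_⟩
    filter_upwards [hδpos] with n hn
    set x := δ n with hxdef
    set N := Efn a1 b1 x - Efn a2 b2 x with hN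
    set D := Efn g bd x - Efn (-g) bd x with hD
    have hDlb : 2 * g * x ≤ D := hden x hn
    have hD0 : 0 < D := lt_of_lt_of_le (by positivity) hDlb
    have heq : N / D - (c0 + c1 * x) = (N - (c0 + c1 * x) * D) / D := by
      field_simp
    rw [heq]
    have hcalc : ‖(N - (c0 + c1 * x) * D) / D‖ = |N - (c0 + c1 * x) * D| / D := by
      rw [Real.norm_eq_abs, abs_div, abs_of_pos hD0]
    rw [hcalc]
    have hstep : |N - (c0 + c1 * x) * D| / D ≤ |N - (c0 + c1 * x) * D| / (2 * g * x) := by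
      gcongr
    refine hstep.trans (le_of_eq ?_)
    rw [Real.norm_eq_abs, abs_mul, abs_inv, abs_of_pos hn]
    field_simp
  have heq2 : (fun n => δ n ^ 3 * (δ n)⁻¹) =ᶠ[atTop] fun n => δ n ^ 2 := by
    filter_upwards [hδpos] with n hn
    field_simp
  have step2 := (hKc.mul (isBigO_refl (fun n => (δ n)⁻¹) atTop)).trans heq2.isBigO
  exact step1.trans (step2.congr_left fun n => rfl)

theorem stmt11 (μ σ r T : ℝ) (hμ : μ > 0) (hσ : σ > 0) (hr : r ≥ 0) (hT : T > 0) (H : ℕ)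
    (δ un dn rn pnu pnd : ℕ → ℝ)
    (hδ : ∀ n : ℕ, δ n = 1 / Real.sqrt n)
    (hu : ∀ n, un n = Real.exp (μ * T * δ n ^ 2 + σ * Real.sqrt T * δ n))
    (hd : ∀ n, dn n = Real.exp (μ * T * δ n ^ 2 - σ * Real.sqrt T * δ n))
    (hr' : ∀ n, rn n = r * T * δ n ^ 2)
    (hpu : ∀ n, pnu n = (un n ^ H * Real.exp (rn n) - dn n ^ (H + 1)) /
      (un n ^ (H + 1) - dn n ^ (H + 1)))
    (hpd : ∀ n, pnd n = (Real.exp (rn n) * dn n ^ H - dn n ^ (H + 1)) /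
      (un n ^ (H + 1) - dn n ^ (H + 1))) :
    ((fun n : ℕ => pnd n - (1 / (2 * ((H : ℝ) + 1))
        - ((μ - r) / (2 * ((H : ℝ) + 1) * σ) + (2 * (H : ℝ) + 1) * σ / (4 * ((H : ℝ) + 1)))
            * Real.sqrt T * δ n))
      =O[atTop] fun n => δ n ^ 2) ∧
    ((fun n : ℕ => (pnu n - pnd n) - (H : ℝ) / ((H : ℝ) + 1))
      =O[atTop] fun n => δ n ^ 2) := by
  set v : ℝ := Real.sqrt T with hv
  have hv0 : 0 < v := Real.sqrt_pos.mpr hT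
  have hv2 : v ^ 2 = T := Real.sq_sqrt hT.le
  have hH1 : (0:ℝ) < (H:ℝ) + 1 := by positivity
  -- δ facts
  have hδpos : ∀ᶠ n in atTop, 0 < δ n := by
    filter_upwards [eventually_ge_atTop 1] with n hn
    rw [hδ n]
    exact div_pos one_pos (Real.sqrt_pos.mpr (by exact_mod_cast hn))
  have hδ0 : Tendsto δ atTop (nhds 0) := by
    have h1 : Tendsto (fun n : ℕ => Real.sqrt n) atTop atTop := by
      apply tendsto_atTop_atTop_of_monotone
      · intro a b hab
        exact Real.sqrt_le_sqrt (by exact_mod_cast hab)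
      · intro b
        refine ⟨⌈b ^ 2⌉₊, ?_⟩
        rcases le_or_gt b 0 with hb | hb
        · exact hb.trans (Real.sqrt_nonneg _)
        · have hb2 : (b ^ 2 : ℝ) ≤ (⌈b ^ 2⌉₊ : ℝ) := Nat.le_ceil _
          calc b = Real.sqrt (b ^ 2) := (Real.sqrt_sq hb.le).symm
            _ ≤ Real.sqrt (⌈b ^ 2⌉₊ : ℝ) := Real.sqrt_le_sqrt hb2
    have h2 := h1.inv_tendsto_atTop
    refine Tendsto.congr (fun n => ?_) h2
    rw [hδ n, one_div]
    rfl
  -- constants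
  set s : ℝ := σ * v with hs
  set γ : ℝ := ((H:ℝ) + 1) * s with hγ
  set bd : ℝ := ((H:ℝ) + 1) * (μ * T) with hbd
  set b1 : ℝ := r * T + (H:ℝ) * (μ * T) with hb1
  have hγ0 : 0 < γ := by rw [hγ, hs]; positivity
  have hbd0 : 0 ≤ bd := by rw [hbd]; positivity
  -- rewriting the chain in Efn form
  have hEu : ∀ n, un n ^ (H + 1) = Efn γ bd (δ n) := by
    intro n
    rw [hu n, ← Real.exp_nat_mul]
    simp only [Efn]
    congr 1
    rw [hγ, hbd, hs]
    push_cast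
    ring
  have hEd : ∀ n, dn n ^ (H + 1) = Efn (-γ) bd (δ n) := by
    intro n
    rw [hd n, ← Real.exp_nat_mul]
    simp only [Efn]
    congr 1
    rw [hγ, hbd, hs]
    push_cast
    ring
  have hF1 : ∀ n, Real.exp (rn n) * dn n ^ H = Efn (-((H:ℝ) * s)) b1 (δ n) := by
    intro n
    rw [hr' n, hd n, ← Real.exp_nat_mul, ← Real.exp_add]
    simp only [Efn]
    congr 1
    rw [hb1, hs]
    push_cast
    ring
  have hF2 : ∀ n, un n ^ H * Real.exp (rn n) = Efn ((H:ℝ) * s) b1 (δ n) := by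
    intro n
    rw [hr' n, hu n, ← Real.exp_nat_mul, ← Real.exp_add]
    simp only [Efn]
    congr 1
    rw [hb1, hs]
    push_cast
    ring
  constructor
  · -- first claim
    have hZ1 : ∀ x : ℝ, Pfn (-((H:ℝ) * s)) b1 x - Pfn (-γ) bd x
        - ((1 / (2 * ((H:ℝ) + 1))
            + (-(((μ - r) / (2 * ((H:ℝ) + 1) * σ) + (2 * (H:ℝ) + 1) * σ / (4 * ((H:ℝ) + 1)))
              * v)) * x)
          * (Pfn γ bd x - Pfn (-γ) bd x)) = 0 := by
      intro x
      simp only [Pfn]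
      rw [hγ, hbd, hb1, hs, ← hv2]
      field_simp
      ring
    have key1 := keyQuot (-((H:ℝ) * s)) b1 (-γ) bd γ bd
      (1 / (2 * ((H:ℝ) + 1)))
      (-(((μ - r) / (2 * ((H:ℝ) + 1) * σ) + (2 * (H:ℝ) + 1) * σ / (4 * ((H:ℝ) + 1))) * v))
      hZ1 hγ0 hbd0 δ hδpos hδ0
    refine key1.congr_left fun n => ?_
    rw [hpd n, hF1 n, hEd n, hEu n]
    ring
  · -- second claim
    have hZ2 : ∀ x : ℝ, Pfn ((H:ℝ) * s) b1 x - Pfn (-((H:ℝ) * s)) b1 x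
        - (((H:ℝ) / ((H:ℝ) + 1) + 0 * x) * (Pfn γ bd x - Pfn (-γ) bd x)) = 0 := by
      intro x
      simp only [Pfn]
      rw [hγ]
      field_simp
      ring
    have key2 := keyQuot ((H:ℝ) * s) b1 (-((H:ℝ) * s)) b1 γ bd
      ((H:ℝ) / ((H:ℝ) + 1)) 0 hZ2 hγ0 hbd0 δ hδpos hδ0
    refine key2.congr_left fun n => ?_
    rw [hpu n, hpd n, hF1 n, hF2 n, hEd n, hEu n]
    ring
end

section
/- Let u > e^r > d > 0, S₀ > 0, H ≥ 0, N > H, and Φ convex. Define p_u, q_u, p_d, q_d as in the delayed binomial model and let V_k(·,·) be the super-replication value process defined by the terminal condition V_{N-1}(S_{N-1-H}, S_{N-1-H} u^j d^{H-j}) = e^{-r}[p_j Φ(S_{N-1-H} u^{H+1}) + q_j Φ(S_{N-1-H} d^{H+1})] and the backward recursion V_k(s, s u^j d^{H-j}) = e^{-r}[p_j V_{k+1}(s u, s u^{H+1}) + q_j V_{k+1}(s d, s d^{H+1})] for H ≤ k ≤ N−2. Then V_k(s, s u^H) = e^{-r(N-k)} E[Φ(S_N) | chain started in up state], where the expectation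 is over the two-state Markov chain on up/down moves with transition matrix rows (q_d, p_d), (q_u, p_u) for the first N−k−1 steps, followed by a final block of H+1 identical moves (all up with probability p_u or p_d, all down with q_u or q_d, according to the previous state), applied multiplicatively to the price starting at s. -/
/-- One-step transition probability of the delayed-binomial pricing chain:
`a` is the previous move (true = up), `b` the next move. -/
noncomputable def dtrans (pu pd : ℝ) (a b : Bool) : ℝ :=
  if b then (if a then pu else pd) else (if a then 1 - pu else 1 - pd)

/-- Probability of a path `x` of the chain started in state `b0`. -/
noncomputable def pathProb (pu pd : ℝ) (b0 : Bool) {m : ℕ} (x : Fin (m + 1) → Bool) : ℝ :=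
  ∏ i : Fin (m + 1),
    dtrans pu pd
      (if (i : ℕ) = 0 then b0
       else x ⟨(i : ℕ) - 1, lt_of_le_of_lt (Nat.sub_le _ _) i.isLt⟩)
      (x i)

/-- Number of up moves before the final block. -/
def upCount {m : ℕ} (x : Fin (m + 1) → Bool) : ℕ :=
  (Finset.univ.filter fun i : Fin (m + 1) => i ≠ Fin.last m ∧ x i = true).card

/-- Terminal price: ordinary moves, followed by a final block of `H+1` identical moves
determined by the last coordinate. -/
noncomputable def termPrice (u d s : ℝ) (H : ℕ) {m : ℕ} (x : Fin (m + 1) → Bool) : ℝ :=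
  s * u ^ upCount x * d ^ (m - upCount x) *
    (if x (Fin.last m) then u ^ (H + 1) else d ^ (H + 1))

lemma cons_apply {m : ℕ} (b : Bool) (y : Fin (m + 1) → Bool) (i : Fin (m + 1)) :
    (Fin.cons b y : Fin (m + 2) → Bool) (⟨(i : ℕ), lt_of_le_of_lt (Nat.le_of_lt i.isLt) (Nat.lt_succ_self _)⟩ : Fin (m + 2)) =
      if (i : ℕ) = 0 then b else y ⟨(i : ℕ) - 1, lt_of_le_of_lt (Nat.sub_le _ _) i.isLt⟩ := by
  rcases i with ⟨iv, hi⟩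
  cases iv with
  | zero => simp
  | succ k =>
    have h1 : (⟨k + 1, by omega⟩ : Fin (m + 2)) = Fin.succ ⟨k, by omega⟩ := rfl
    simp only [h1, Fin.cons_succ]
    simp

lemma cons_pathProb (pu pd : ℝ) (b0 b : Bool) {m : ℕ} (y : Fin (m + 1) → Bool) :
    pathProb pu pd b0 (Fin.cons b y) = dtrans pu pd b0 b * pathProb pu pd b y := by
  unfold pathProb
  rw [Fin.prod_univ_succ]
  have h1 : ∀ i : Fin (m+1),
      dtrans pu pd
        (if ((Fin.succ i : Fin (m+2)) : ℕ) = 0 then b0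
         else (Fin.cons b y : Fin (m+2) → Bool) ⟨((Fin.succ i : Fin (m+2)) : ℕ) - 1,
           lt_of_le_of_lt (Nat.sub_le _ _) (Fin.succ i).isLt⟩)
        ((Fin.cons b y : Fin (m+2) → Bool) (Fin.succ i)) =
      dtrans pu pd
        (if (i : ℕ) = 0 then b else y ⟨(i : ℕ) - 1, lt_of_le_of_lt (Nat.sub_le _ _) i.isLt⟩)
        (y i) := by
    intro i
    rw [Fin.cons_succ]
    congr 1
    simp only [Fin.val_succ, Nat.succ_ne_zero, if_false]
    exact cons_apply b y i
  rw [Finset.prod_congr rfl (fun i _ => h1 i)]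
  congr 1

lemma cons_upCount {m : ℕ} (b : Bool) (y : Fin (m + 1) → Bool) :
    upCount (Fin.cons b y) = (if b then 1 else 0) + upCount y := by
  unfold upCount
  rw [Finset.card_filter, Finset.card_filter, Fin.sum_univ_succ]
  congr 1
  · have h0 : (0 : Fin (m + 1 + 1)) ≠ Fin.last (m + 1) := by
      simp [Fin.ext_iff]
    cases b <;> simp [h0]
  apply Finset.sum_congr rfl
  intro i _
  have hsucc : (Fin.succ i = Fin.last (m + 1)) ↔ (i = Fin.last m) := by
    rw [← Fin.succ_last]
    exact Fin.succ_inj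
  simp [Fin.cons_succ, hsucc]

lemma upCount_le {m : ℕ} (y : Fin (m + 1) → Bool) : upCount y ≤ m := by
  unfold upCount
  calc (Finset.univ.filter fun i : Fin (m + 1) => i ≠ Fin.last m ∧ y i = true).card
      ≤ (Finset.univ.erase (Fin.last m)).card := by
        apply Finset.card_le_card
        intro i hi
        simp at hi ⊢
        exact hi.1
    _ = m := by simp

lemma cons_termPrice (u d s : ℝ) (H : ℕ) {m : ℕ} (b : Bool) (y : Fin (m + 1) → Bool) :
    termPrice u d s H (Fin.cons b y) = termPrice u d (s * (if b then u else d)) H y := by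
  unfold termPrice
  have hlast : (Fin.cons b y : Fin (m + 2) → Bool) (Fin.last (m + 1)) = y (Fin.last m) := by
    rw [← Fin.succ_last, Fin.cons_succ]
  rw [hlast, cons_upCount]
  have hle := upCount_le y
  cases b
  · simp only [if_neg Bool.false_ne_true, Bool.false_eq_true, if_false, Nat.zero_add]
    have : m + 1 - upCount y = (m - upCount y) + 1 := by omega
    rw [this, pow_succ]
    ring
  · simp only [if_true]
    have : m + 1 - (1 + upCount y) = m - upCount y := by omega
    rw [this, pow_add, pow_one]
    ring

lemma const_pathProb (pu pd : ℝ) (b0 c : Bool) :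
    pathProb pu pd b0 (fun _ : Fin 1 => c) = dtrans pu pd b0 c := by
  unfold pathProb
  rw [Fin.prod_univ_one]
  simp

lemma const_upCount (c : Bool) : upCount (fun _ : Fin 1 => c) = 0 := by
  unfold upCount
  rw [Finset.card_eq_zero, Finset.filter_eq_empty_iff]
  intro i _
  have h0 : i = Fin.last 0 := Fin.ext (by omega)
  simp [h0]

lemma const_termPrice (u d s : ℝ) (H : ℕ) (c : Bool) :
    termPrice u d s H (fun _ : Fin 1 => c) =
      s * (if c then u ^ (H + 1) else d ^ (H + 1)) := by
  unfold termPrice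
  rw [const_upCount]
  simp

lemma key (u d r : ℝ) (H : ℕ) (Φ : ℝ → ℝ) (pu pd : ℝ) (V : ℕ → ℝ → Bool → ℝ)
    (hV1 : ∀ s : ℝ,
      V 1 s true = Real.exp (-r) *
        (pu * Φ (s * u ^ (H + 1)) + (1 - pu) * Φ (s * d ^ (H + 1))) ∧
      V 1 s false = Real.exp (-r) *
        (pd * Φ (s * u ^ (H + 1)) + (1 - pd) * Φ (s * d ^ (H + 1))))
    (hVrec : ∀ m : ℕ, 1 ≤ m → ∀ s : ℝ,
      V (m + 1) s true = Real.exp (-r) *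
        (pu * V m (s * u) true + (1 - pu) * V m (s * d) false) ∧
      V (m + 1) s false = Real.exp (-r) *
        (pd * V m (s * u) true + (1 - pd) * V m (s * d) false)) :
    ∀ m : ℕ, ∀ s : ℝ, ∀ b0 : Bool,
      V (m + 1) s b0 = Real.exp (-(r * (m + 1))) *
        ∑ x : Fin (m + 1) → Bool, pathProb pu pd b0 x * Φ (termPrice u d s H x) := by
  intro m
  induction m with
  | zero =>
    intro s b0
    have hsum : ∀ g : (Fin 1 → Bool) → ℝ,
        ∑ x : Fin 1 → Bool, g x = g (fun _ => true) + g (fun _ => false) := by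
      intro g
      rw [Fintype.sum_equiv (Equiv.funUnique (Fin 1) Bool) g (fun b => g (fun _ => b))
        (fun x => by
          congr 1
          exact funext fun i => by rw [show i = 0 from Fin.ext (by omega)]; rfl)]
      exact Fintype.sum_bool _
    rw [hsum, const_pathProb, const_pathProb, const_termPrice, const_termPrice]
    have he : Real.exp (-(r * ((0 : ℕ) + 1))) = Real.exp (-r) := by norm_num
    rw [he]
    cases b0
    · rw [(hV1 s).2]
      simp [dtrans]
    · rw [(hV1 s).1]
      simp [dtrans]
  | succ m IH =>
    intro s b0
    have hVr := hVrec (m + 1) (Nat.le_add_left 1 m) s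
    have hsum : ∑ x : Fin (m + 2) → Bool, pathProb pu pd b0 x * Φ (termPrice u d s H x)
        = ∑ b : Bool, ∑ y : Fin (m + 1) → Bool,
            pathProb pu pd b0 (Fin.cons b y) * Φ (termPrice u d s H (Fin.cons b y)) := by
      calc ∑ x : Fin (m + 2) → Bool, pathProb pu pd b0 x * Φ (termPrice u d s H x)
          = ∑ p : Bool × (Fin (m + 1) → Bool),
              pathProb pu pd b0 (Fin.cons p.1 p.2) * Φ (termPrice u d s H (Fin.cons p.1 p.2)) :=
            (Fintype.sum_equiv (Fin.consEquiv (fun _ : Fin (m + 2) => Bool))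
              (fun p => pathProb pu pd b0 (Fin.cons p.1 p.2) *
                Φ (termPrice u d s H (Fin.cons p.1 p.2)))
              (fun x => pathProb pu pd b0 x * Φ (termPrice u d s H x))
              (fun p => rfl)).symm
        _ = _ := Fintype.sum_prod_type _
    have hterm : ∀ (b : Bool) (y : Fin (m + 1) → Bool),
        pathProb pu pd b0 (Fin.cons b y) * Φ (termPrice u d s H (Fin.cons b y))
          = dtrans pu pd b0 b *
            (pathProb pu pd b y * Φ (termPrice u d (s * (if b then u else d)) H y)) := by
      intro b y
      rw [cons_pathProb, cons_termPrice]
      ring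
    rw [hsum]
    have hinner : ∀ b : Bool, ∑ y : Fin (m + 1) → Bool,
        pathProb pu pd b0 (Fin.cons b y) * Φ (termPrice u d s H (Fin.cons b y))
        = dtrans pu pd b0 b * ∑ y : Fin (m + 1) → Bool,
            pathProb pu pd b y * Φ (termPrice u d (s * (if b then u else d)) H y) := by
      intro b
      rw [Finset.mul_sum]
      exact Finset.sum_congr rfl fun y _ => hterm b y
    rw [Fintype.sum_bool, hinner, hinner]
    have hexp : Real.exp (-(r * ((m + 1 : ℕ) + 1)))
        = Real.exp (-r) * Real.exp (-(r * ((m : ℕ) + 1))) := by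
      rw [← Real.exp_add]
      congr 1
      push_cast
      ring
    rw [hexp]
    have h1 := IH (s * u) true
    have h2 := IH (s * d) false
    cases b0
    · rw [hVr.2, h1, h2]
      simp only [dtrans, if_true, if_false]
      ring_nf
      simp [dtrans]
      ring
    · rw [hVr.1, h1, h2]
      simp only [dtrans, if_true, if_false]
      ring_nf
      simp [dtrans]
      ring

theorem stmt13 (u d r S0 : ℝ) (H N : ℕ)
    (hu : u > Real.exp r) (hd : Real.exp r > d) (hd0 : d > 0) (hS0 : S0 > 0) (hHN : H < N)
    (Φ : ℝ → ℝ) (hΦ : ConvexOn ℝ Set.univ Φ)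
    (pu pd : ℝ)
    (hpu : pu = (u ^ H * Real.exp r - d ^ (H + 1)) / (u ^ (H + 1) - d ^ (H + 1)))
    (hpd : pd = (Real.exp r * d ^ H - d ^ (H + 1)) / (u ^ (H + 1) - d ^ (H + 1)))
    (V : ℕ → ℝ → Bool → ℝ)
    (hV1 : ∀ s : ℝ,
      V 1 s true = Real.exp (-r) *
        (pu * Φ (s * u ^ (H + 1)) + (1 - pu) * Φ (s * d ^ (H + 1))) ∧
      V 1 s false = Real.exp (-r) *
        (pd * Φ (s * u ^ (H + 1)) + (1 - pd) * Φ (s * d ^ (H + 1))))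
    (hVrec : ∀ m : ℕ, 1 ≤ m → ∀ s : ℝ,
      V (m + 1) s true = Real.exp (-r) *
        (pu * V m (s * u) true + (1 - pu) * V m (s * d) false) ∧
      V (m + 1) s false = Real.exp (-r) *
        (pd * V m (s * u) true + (1 - pd) * V m (s * d) false)) :
    ∀ m : ℕ, ∀ s : ℝ, s > 0 →
      V (m + 1) s true = Real.exp (-(r * (m + 1))) *
        ∑ x : Fin (m + 1) → Bool, pathProb pu pd true x * Φ (termPrice u d s H x) := by
  intro m s _
  exact key u d r H Φ pu pd V hV1 hVrec m s true
end
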